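/- Let ε ∼ N(0,1), let μ̄ ∈ ℝ, σ̄ > 0, b ≥ 0, and define the soft-thresholding activation φ_b(x) = max(0, x−b) − max(0, −x−b). Then E[φ_b(μ̄ + σ̄ε)] = (μ̄ − b)(1 − Φ(−(μ̄−b)/σ̄)) + σ̄·(1/√(2π))·exp(−(μ̄−b)²/(2σ̄²)) + (μ̄ + b)(1 − Φ((μ̄+b)/σ̄)) − σ̄·(1/√(2π))·exp(−(μ̄+b)²/(2σ̄²)). -/

import Mathlib

open MeasureTheory ProbabilityTheory
open scoped NNReal ENNReal

/-- Soft-thresholding (LSA) activation `φ_b(x) = max(0, x-b) - max(0, -x-b)`. -/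
noncomputable def lsa (b x : ℝ) : ℝ := max 0 (x - b) - max 0 (-x - b)

/-- Standard normal CDF. -/
noncomputable def stdNormalCDF (t : ℝ) : ℝ := (gaussianReal 0 1 (Set.Iic t)).toReal

/-- Standard normal pdf. -/
noncomputable def npdf (x : ℝ) : ℝ := (Real.sqrt (2 * Real.pi))⁻¹ * Real.exp (-(1/2) * x ^ 2)

lemma npdf_nonneg (x : ℝ) : 0 ≤ npdf x := by
  unfold npdf; positivity

lemma npdf_continuous : Continuous npdf := by
  unfold npdf; continuity

lemma pdf_eq : gaussianPDFReal 0 1 = npdf := by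
  funext x
  simp only [gaussianPDFReal, npdf, NNReal.coe_one, mul_one, sub_zero]
  congr 1
  ring

lemma int_npdf : Integrable npdf := by
  have := (integrable_exp_neg_mul_sq (by norm_num : (0:ℝ) < 1/2)).const_mul
    (Real.sqrt (2 * Real.pi))⁻¹
  refine this.congr (Filter.EventuallyEq.of_eq (funext fun x => ?_))
  simp only [npdf, neg_mul]

lemma int_xnpdf : Integrable (fun x => x * npdf x) := by
  have h := (integrable_rpow_mul_exp_neg_mul_sq (by norm_num : (0:ℝ) < 1/2)
    (by norm_num : (-1:ℝ) < 1)).const_mul (Real.sqrt (2 * Real.pi))⁻¹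
  refine h.congr (Filter.EventuallyEq.of_eq (funext fun x => ?_))
  simp only [Real.rpow_one, npdf, neg_mul]
  ring

lemma int_relu (m σ : ℝ) : Integrable (fun x => npdf x * max 0 (m + σ * x)) := by
  refine Integrable.mono' ((int_npdf.const_mul |m|).add ((int_xnpdf.abs).const_mul |σ|))
    ?_ (Filter.Eventually.of_forall fun x => ?_)
  · exact (npdf_continuous.mul (continuous_const.max (continuous_const.add
      (continuous_const.mul continuous_id)))).aestronglyMeasurable
  · have h1 : 0 ≤ npdf x * max 0 (m + σ * x) :=
      mul_nonneg (npdf_nonneg x) (le_max_left _ _)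
    rw [Real.norm_eq_abs, abs_of_nonneg h1]
    have h2 : max 0 (m + σ * x) ≤ |m| + |σ| * |x| := by
      refine max_le (by positivity) ((le_abs_self _).trans ?_)
      calc |m + σ * x| ≤ |m| + |σ * x| := abs_add_le _ _
        _ = |m| + |σ| * |x| := by rw [abs_mul]
    calc npdf x * max 0 (m + σ * x) ≤ npdf x * (|m| + |σ| * |x|) :=
          mul_le_mul_of_nonneg_left h2 (npdf_nonneg x)
      _ = |m| * npdf x + |σ| * |x * npdf x| := by
          rw [abs_mul, abs_of_nonneg (npdf_nonneg x)]; ring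


lemma integral_gaussian_eq (g : ℝ → ℝ) :
    ∫ x, g x ∂(gaussianReal 0 1) = ∫ x, npdf x * g x := by
  rw [gaussianReal_of_var_ne_zero 0 one_ne_zero]
  have hmeq : gaussianPDF 0 1 = fun x => ((Real.toNNReal (npdf x) : ℝ≥0) : ℝ≥0∞) := by
    funext x
    rw [gaussianPDF, pdf_eq, ENNReal.ofReal]
  rw [hmeq, integral_withDensity_eq_integral_smul
    (npdf_continuous.measurable.real_toNNReal) g]
  congr 1
  funext x
  rw [NNReal.smul_def, Real.coe_toNNReal _ (npdf_nonneg x), smul_eq_mul]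

lemma npdf_total : ∫ x, npdf x = 1 := by
  rw [← pdf_eq]
  exact integral_gaussianPDFReal_eq_one 0 one_ne_zero

lemma cdf_eq (t : ℝ) : stdNormalCDF t = ∫ x in Set.Iic t, npdf x := by
  rw [stdNormalCDF, gaussianReal_apply_eq_integral 0 one_ne_zero, pdf_eq,
    ENNReal.toReal_ofReal (setIntegral_nonneg measurableSet_Iic fun x _ => npdf_nonneg x)]

lemma npdf_Ioi (t : ℝ) : ∫ x in Set.Ioi t, npdf x = 1 - stdNormalCDF t := by
  have h := intervalIntegral.integral_Iic_add_Ioi (b := t) (f := npdf) (μ := volume)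
    int_npdf.integrableOn int_npdf.integrableOn
  rw [npdf_total] at h
  rw [cdf_eq]
  linarith

lemma xnpdf_Ioi (t : ℝ) : ∫ x in Set.Ioi t, x * npdf x = npdf t := by
  have hderiv : ∀ x ∈ Set.Ioi t, HasDerivAt (fun y => -npdf y) (x * npdf x) x := by
    intro x _
    have hq : HasDerivAt (fun y : ℝ => -(1/2) * y ^ 2) (-(1/2) * (2 * x ^ 1)) x :=
      (hasDerivAt_pow 2 x).const_mul _
    have hexp := hq.exp
    have : HasDerivAt (fun y => -((Real.sqrt (2 * Real.pi))⁻¹ * Real.exp (-(1/2) * y ^ 2))) _ x :=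
      (hexp.const_mul (Real.sqrt (2 * Real.pi))⁻¹).neg
    convert this using 1
    · simp only [npdf]
    simp only [npdf]
    ring
  have htend : Filter.Tendsto (fun y => -npdf y) Filter.atTop (nhds 0) := by
    have h0 : Filter.Tendsto (fun x : ℝ => -(1/2) * x ^ 2) Filter.atTop Filter.atBot :=
      (Filter.tendsto_pow_atTop (two_ne_zero)).const_mul_atTop_of_neg (by norm_num)
    have h1 := (Real.tendsto_exp_atBot.comp h0).const_mul (Real.sqrt (2 * Real.pi))⁻¹
    have h2 := h1.neg
    simpa [npdf, Function.comp] using h2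
  have h := MeasureTheory.integral_Ioi_of_hasDerivAt_of_tendsto
    ((npdf_continuous.neg.continuousWithinAt)) hderiv int_xnpdf.integrableOn htend
  simpa using h

lemma relu_int (m σ : ℝ) (hσ : 0 < σ) :
    ∫ x, npdf x * max 0 (m + σ * x) =
      m * (1 - stdNormalCDF (-m / σ)) + σ * npdf (-m / σ) := by
  set t := -m / σ with ht
  have htv : m + σ * t = 0 := by
    rw [ht]; field_simp
    ring
  have heq : (fun x => npdf x * max 0 (m + σ * x)) =
      Set.indicator (Set.Ioi t) (fun x => m * npdf x + σ * (x * npdf x)) := by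
    funext x
    by_cases h : x ∈ Set.Ioi t
    · rw [Set.indicator_of_mem h]
      have hx : t < x := h
      have hpos : 0 < m + σ * x := by nlinarith
      rw [max_eq_right hpos.le]
      ring
    · rw [Set.indicator_of_notMem h]
      have hx : x ≤ t := not_lt.mp h
      have hneg : m + σ * x ≤ 0 := by nlinarith
      rw [max_eq_left hneg, mul_zero]
  rw [heq, integral_indicator measurableSet_Ioi,
    integral_add ((int_npdf.const_mul m).integrableOn) ((int_xnpdf.const_mul σ).integrableOn),
    integral_const_mul, integral_const_mul, npdf_Ioi, xnpdf_Ioi]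

lemma npdf_val (m σ : ℝ) (hσ : 0 < σ) :
    npdf (m / σ) = 1 / Real.sqrt (2 * Real.pi) * Real.exp (-m ^ 2 / (2 * σ ^ 2)) := by
  unfold npdf
  rw [show (Real.sqrt (2 * Real.pi))⁻¹ = 1 / Real.sqrt (2 * Real.pi) from (one_div _).symm]
  congr 1
  rw [div_pow]
  field_simp

theorem lsa_expectation (μ σ b : ℝ) (hσ : 0 < σ) (hb : 0 ≤ b) :
    ∫ x, lsa b (μ + σ * x) ∂(gaussianReal 0 1) =
      (μ - b) * (1 - stdNormalCDF (-(μ - b) / σ))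
        + σ * (1 / Real.sqrt (2 * Real.pi)) * Real.exp (-(μ - b) ^ 2 / (2 * σ ^ 2))
        + (μ + b) * (1 - stdNormalCDF ((μ + b) / σ))
        - σ * (1 / Real.sqrt (2 * Real.pi)) * Real.exp (-(μ + b) ^ 2 / (2 * σ ^ 2)) := by
  have key : (fun x => lsa b (μ + σ * x)) =
      fun x => max 0 ((μ - b) + σ * x) - max 0 ((-(μ + b)) + σ * (-x)) := by
    funext x
    unfold lsa
    rw [show μ + σ * x - b = (μ - b) + σ * x by ring,
      show -(μ + σ * x) - b = (-(μ + b)) + σ * (-x) by ring]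
  have hneg : ∀ y : ℝ, npdf (-y) = npdf y := fun y => by simp [npdf]
  have hint2 : Integrable (fun x => npdf x * max 0 ((-(μ + b)) + σ * (-x))) := by
    have h := ((Measure.measurePreserving_neg (volume : Measure ℝ)).integrable_comp_emb
      (Homeomorph.neg ℝ).measurableEmbedding).2 (int_relu (-(μ + b)) σ)
    refine h.congr (Filter.EventuallyEq.of_eq (funext fun x => ?_))
    show npdf (-x) * max 0 ((-(μ + b)) + σ * (-x)) = _
    rw [hneg]
  have hsub : ∫ x, npdf x * max 0 ((-(μ + b)) + σ * (-x)) =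
      ∫ x, npdf x * max 0 ((-(μ + b)) + σ * x) := by
    have h := (Measure.measurePreserving_neg (volume : Measure ℝ)).integral_comp
      (Homeomorph.neg ℝ).measurableEmbedding
      (fun x => npdf x * max 0 ((-(μ + b)) + σ * x))
    rw [← h]
    congr 1
    funext x
    show npdf x * max 0 ((-(μ + b)) + σ * (-x)) = npdf (-x) * max 0 ((-(μ + b)) + σ * (-x))
    rw [hneg]
  calc ∫ x, lsa b (μ + σ * x) ∂(gaussianReal 0 1)
      = ∫ x, npdf x * (max 0 ((μ - b) + σ * x) - max 0 ((-(μ + b)) + σ * (-x))) := by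
        rw [integral_gaussian_eq]
        congr 1
        funext x
        rw [congrFun key x]
    _ = (∫ x, npdf x * max 0 ((μ - b) + σ * x))
        - ∫ x, npdf x * max 0 ((-(μ + b)) + σ * (-x)) := by
        simp_rw [mul_sub]
        exact integral_sub (int_relu (μ - b) σ) hint2
    _ = ((μ - b) * (1 - stdNormalCDF (-(μ - b) / σ)) + σ * npdf (-(μ - b) / σ))
        - ((-(μ + b)) * (1 - stdNormalCDF (-(-(μ + b)) / σ)) + σ * npdf (-(-(μ + b)) / σ)) := by
        rw [relu_int (μ - b) σ hσ, hsub, relu_int (-(μ + b)) σ hσ]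
    _ = _ := by
        have e1 : npdf (-(μ - b) / σ) =
            1 / Real.sqrt (2 * Real.pi) * Real.exp (-(μ - b) ^ 2 / (2 * σ ^ 2)) := by
          rw [neg_div, hneg, npdf_val _ _ hσ]
        have e2 : npdf (-(-(μ + b)) / σ) =
            1 / Real.sqrt (2 * Real.pi) * Real.exp (-(μ + b) ^ 2 / (2 * σ ^ 2)) := by
          rw [neg_neg, npdf_val _ _ hσ]
        rw [e1, e2, neg_neg]
        ring
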